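/- Let h : ℝ → ℝ be differentiable, let n, b, c₁ ∈ ℝ, and let U : ℝ → ℝ be twice differentiable on (0,∞) such that h(U'(r)) = c₁·r^(1−n) for all r > 0, where r^(1−n) is the real power Real.rpow. Then the function u(t,r) = b·t + U(r) satisfies the radial generalized p-Laplacian diffusion–reaction equation with constant source, u_t(t,r) = h'(u_r(t,r))·u_rr(t,r) + ((n−1)/r)·h(u_r(t,r)) + b, for all t ∈ ℝ and r > 0. -/

import Mathlib

noncomputable section

/-- Partial derivative in the first (time) variable. -/
def partial_t (u : ℝ → ℝ → ℝ) (t r : ℝ) : ℝ := deriv (fun s => u s r) t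

/-- Partial derivative in the second (space) variable. -/
def partial_r (u : ℝ → ℝ → ℝ) (t r : ℝ) : ℝ := deriv (fun s => u t s) r

/-- Second partial derivative in the second (space) variable. -/
def partial_rr (u : ℝ → ℝ → ℝ) (t r : ℝ) : ℝ := deriv (deriv (fun s => u t s)) r

/-- Mixed partial derivative: first in space, then in time. -/
def partial_tr (u : ℝ → ℝ → ℝ) (t r : ℝ) : ℝ := deriv (fun s => deriv (fun y => u s y) r) t

/-- `u` is C² on ℝ × (0,∞): `u`, `u_t`, `u_r`, `u_rr` and the mixed partial `u_tr`
exist and are continuous there. -/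
def IsC2On (u : ℝ → ℝ → ℝ) : Prop :=
  (∀ t r : ℝ, 0 < r → DifferentiableAt ℝ (fun s => u s r) t) ∧
  (∀ t r : ℝ, 0 < r → DifferentiableAt ℝ (fun s => u t s) r) ∧
  (∀ t r : ℝ, 0 < r → DifferentiableAt ℝ (deriv (fun s => u t s)) r) ∧
  (∀ t r : ℝ, 0 < r → DifferentiableAt ℝ (fun s => deriv (fun y => u s y) r) t) ∧
  ContinuousOn (fun q : ℝ × ℝ => u q.1 q.2) {q : ℝ × ℝ | 0 < q.2} ∧
  ContinuousOn (fun q : ℝ × ℝ => partial_t u q.1 q.2) {q : ℝ × ℝ | 0 < q.2} ∧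
  ContinuousOn (fun q : ℝ × ℝ => partial_r u q.1 q.2) {q : ℝ × ℝ | 0 < q.2} ∧
  ContinuousOn (fun q : ℝ × ℝ => partial_rr u q.1 q.2) {q : ℝ × ℝ | 0 < q.2} ∧
  ContinuousOn (fun q : ℝ × ℝ => partial_tr u q.1 q.2) {q : ℝ × ℝ | 0 < q.2}

/-- Group-invariant solutions `u(t,r) = b·t + U(r)` of the radial generalized
p-Laplacian diffusion-reaction equation with constant source, obtained by reduction
under the combined time-translation and shift symmetry. -/
theorem group_invariant_solution_translation (h : ℝ → ℝ) (hh : Differentiable ℝ h)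
    (n b c₁ : ℝ)
    (U : ℝ → ℝ)
    (hU1 : ∀ r : ℝ, 0 < r → DifferentiableAt ℝ U r)
    (hU2 : ∀ r : ℝ, 0 < r → DifferentiableAt ℝ (deriv U) r)
    (hUh : ∀ r : ℝ, 0 < r → h (deriv U r) = c₁ * r ^ (1 - n)) :
    ∀ t r : ℝ, 0 < r →
      partial_t (fun t r => b * t + U r) t r
        = deriv h (partial_r (fun t r => b * t + U r) t r)
            * partial_rr (fun t r => b * t + U r) t r
          + ((n - 1) / r) * h (partial_r (fun t r => b * t + U r) t r) + b := by
  intro t r hr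
  have hpt : partial_t (fun t r => b * t + U r) t r = b := by
    unfold partial_t
    simpa using (((hasDerivAt_id t).const_mul b).add_const (U r)).deriv
  have hder : deriv (fun s => b * t + U s) = deriv U := by
    funext x; exact deriv_const_add _
  have hpr : partial_r (fun t r => b * t + U r) t r = deriv U r := by
    unfold partial_r; rw [hder]
  have hprr : partial_rr (fun t r => b * t + U r) t r = deriv (deriv U) r := by
    unfold partial_rr; rw [hder]
  rw [hpt, hpr, hprr]
  -- chain rule: deriv of h ∘ U' at r
  have heq : (fun x => h (deriv U x)) =ᶠ[nhds r] (fun x => c₁ * x ^ (1 - n)) := by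
    filter_upwards [eventually_gt_nhds hr] with x hx using hUh x hx
  have h1 : deriv (fun x => h (deriv U x)) r = deriv h (deriv U r) * deriv (deriv U) r := by
    rw [show (fun x => h (deriv U x)) = h ∘ deriv U from rfl,
      deriv_comp (x := r) (hh.differentiableAt) (hU2 r hr)]
  have h2 : deriv (fun x : ℝ => c₁ * x ^ (1 - n)) r = c₁ * ((1 - n) * r ^ (1 - n - 1)) := by
    rw [deriv_const_mul _ (by
      exact (Real.differentiableAt_rpow_const_of_ne (1 - n) (ne_of_gt hr)))]
    rw [Real.deriv_rpow_const r (1 - n)]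
  have h3 : deriv h (deriv U r) * deriv (deriv U) r = c₁ * ((1 - n) * r ^ (1 - n - 1)) := by
    rw [← h1, ← h2]; exact heq.deriv_eq
  rw [h3, hUh r hr]
  have hsplit : r ^ (1 - n) = r ^ (1 - n - 1) * r := by
    rw [← Real.rpow_add_one (ne_of_gt hr)]
    congr 1; ring
  rw [hsplit]
  field_simp
  ring
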